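/- Let F be a probability distribution on [0,∞) with density f and monotone hazard rate, and let 0 < q < q' < 1 be quantiles. If x > 0 satisfies F^{-1}(q) ≤ x, then F^{-1}(q') ≤ x · ln(1 − q') / ln(1 − q). -/

import Mathlib

open MeasureTheory Filter
open scoped ENNReal

noncomputable section

/-- A distribution `μ` on `[0,∞)` with density `f` has monotone hazard rate (MHR):
its hazard rate `h(x) = f(x)/(1 − F(x)) = f(x)/μ(x,∞)` is nondecreasing on the support of `μ`
(i.e. wherever the upper tail still has positive mass). -/
def IsMHR (f : ℝ → ℝ) (μ : Measure ℝ) : Prop :=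
  ∀ x y : ℝ, x ≤ y → μ (Set.Ioi y) ≠ 0 →
    f x / (μ (Set.Ioi x)).toReal ≤ f y / (μ (Set.Ioi y)).toReal

/-- `F⁻¹(q)`: the value of `μ` at quantile `q`, i.e. `min {v : F(v) ≥ q}`. -/
def quantileFn (μ : Measure ℝ) (q : ℝ) : ℝ :=
  sInf {v : ℝ | q ≤ (μ (Set.Iic v)).toReal}

lemma tail_diff' (μ : Measure ℝ) [IsProbabilityMeasure μ] {a b : ℝ} (hab : a ≤ b) :
    (μ (Set.Ioi a)).toReal - (μ (Set.Ioi b)).toReal = (μ (Set.Ioc a b)).toReal := by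
  have hU : Set.Ioc a b ∪ Set.Ioi b = Set.Ioi a := Set.Ioc_union_Ioi_eq_Ioi hab
  have hd : Disjoint (Set.Ioc a b) (Set.Ioi b) := by
    rw [Set.disjoint_left]
    rintro t ⟨_, h1⟩ h2
    exact absurd h2 (not_lt.2 h1)
  have := measure_union (μ := μ) hd measurableSet_Ioi
  rw [hU] at this
  rw [this, ENNReal.toReal_add (measure_ne_top μ _) (measure_ne_top μ _)]
  ring

lemma interval_mass_upper (f : ℝ → ℝ)
    (μ : Measure ℝ) (hdens : μ = volume.withDensity (fun t => ENNReal.ofReal (f t)))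
    [IsProbabilityMeasure μ]
    {a b M : ℝ} (hab : a ≤ b) (hM : 0 ≤ M) (hbound : ∀ t ∈ Set.Ioc a b, f t ≤ M) :
    (μ (Set.Ioc a b)).toReal ≤ M * (b - a) := by
  have h1 : μ (Set.Ioc a b) = ∫⁻ t in Set.Ioc a b, ENNReal.ofReal (f t) := by
    rw [hdens, withDensity_apply _ measurableSet_Ioc]
  have h2 : (∫⁻ t in Set.Ioc a b, ENNReal.ofReal (f t)) ≤
      ∫⁻ _ in Set.Ioc a b, ENNReal.ofReal M := by
    refine setLIntegral_mono' measurableSet_Ioc fun t ht => ?_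
    exact ENNReal.ofReal_le_ofReal (hbound t ht)
  rw [setLIntegral_const, Real.volume_Ioc] at h2
  have h3 : μ (Set.Ioc a b) ≤ ENNReal.ofReal M * ENNReal.ofReal (b - a) := by
    rw [h1]; exact h2
  calc (μ (Set.Ioc a b)).toReal
      ≤ (ENNReal.ofReal M * ENNReal.ofReal (b - a)).toReal :=
        ENNReal.toReal_mono (by finiteness) h3
    _ = M * (b - a) := by
        rw [ENNReal.toReal_mul, ENNReal.toReal_ofReal hM,
          ENNReal.toReal_ofReal (by linarith)]

lemma interval_mass_lower (f : ℝ → ℝ)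
    (μ : Measure ℝ) (hdens : μ = volume.withDensity (fun t => ENNReal.ofReal (f t)))
    [IsProbabilityMeasure μ]
    {a b M : ℝ} (hab : a ≤ b) (hM : 0 ≤ M) (hbound : ∀ t ∈ Set.Ioc a b, M ≤ f t) :
    M * (b - a) ≤ (μ (Set.Ioc a b)).toReal := by
  have h1 : μ (Set.Ioc a b) = ∫⁻ t in Set.Ioc a b, ENNReal.ofReal (f t) := by
    rw [hdens, withDensity_apply _ measurableSet_Ioc]
  have h2 : (∫⁻ _ in Set.Ioc a b, ENNReal.ofReal M) ≤
      ∫⁻ t in Set.Ioc a b, ENNReal.ofReal (f t) := by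
    refine setLIntegral_mono' measurableSet_Ioc fun t ht => ?_
    exact ENNReal.ofReal_le_ofReal (hbound t ht)
  rw [setLIntegral_const, Real.volume_Ioc] at h2
  have h3 : ENNReal.ofReal M * ENNReal.ofReal (b - a) ≤ μ (Set.Ioc a b) := by
    rw [h1]; exact h2
  calc M * (b - a)
      = (ENNReal.ofReal M * ENNReal.ofReal (b - a)).toReal := by
        rw [ENNReal.toReal_mul, ENNReal.toReal_ofReal hM,
          ENNReal.toReal_ofReal (by linarith)]
    _ ≤ (μ (Set.Ioc a b)).toReal := ENNReal.toReal_mono (measure_ne_top μ _) h3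

set_option maxHeartbeats 1600000 in
/-- Let `μ` be a probability distribution on `[0,∞)` with density `f` and
monotone hazard rate, and let `0 < q < q' < 1` be quantiles. If `x > 0` satisfies
`F⁻¹(q) ≤ x`, then `F⁻¹(q') ≤ x · ln(1−q') / ln(1−q)`. -/
theorem quantile_upper_bound_of_mhr
    (f : ℝ → ℝ) (hf : ∀ t, 0 ≤ f t)
    (μ : Measure ℝ) (hdens : μ = volume.withDensity (fun t => ENNReal.ofReal (f t)))
    (hprob : IsProbabilityMeasure μ) (hnonneg : μ (Set.Iio 0) = 0)
    (hmhr : IsMHR f μ)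
    (q q' : ℝ) (hq : 0 < q) (hqq' : q < q') (hq' : q' < 1)
    (x : ℝ) (hx : 0 < x) (hquant : quantileFn μ q ≤ x) :
    quantileFn μ q' ≤ x * (Real.log (1 - q') / Real.log (1 - q)) := by
  have hfin : ∀ s : Set ℝ, μ s ≠ ∞ := fun s => measure_ne_top μ s
  set S : ℝ → ℝ := fun t => (μ (Set.Ioi t)).toReal with hSdef
  set F : ℝ → ℝ := fun t => (μ (Set.Iic t)).toReal with hFdef
  set c : ℝ := x * (Real.log (1 - q') / Real.log (1 - q)) with hcdef
  have h1q : (0:ℝ) < 1 - q := by linarith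
  have h1q' : (0:ℝ) < 1 - q' := by linarith
  have hlogq : Real.log (1 - q) < 0 := Real.log_neg h1q (by linarith)
  have hlogq' : Real.log (1 - q') < 0 := Real.log_neg h1q' (by linarith)
  have hloglt : Real.log (1 - q') < Real.log (1 - q) :=
    Real.log_lt_log h1q' (by linarith)
  set L : ℝ := -Real.log (1 - q) with hLdef
  set L' : ℝ := -Real.log (1 - q') with hL'def
  have hL : 0 < L := by simp only [hLdef]; linarith
  have hLL' : L < L' := by simp only [hLdef, hL'def]; linarith
  have hcx : c = x * (L' / L) := by
    simp only [hcdef, hLdef, hL'def, neg_div_neg_eq]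
  have hxc : x ≤ c := by
    have h1 : (1:ℝ) ≤ L' / L := (one_le_div hL).2 hLL'.le
    rw [hcx]
    nlinarith
  have hc0 : 0 < c := lt_of_lt_of_le hx hxc
  -- basic facts about F and S
  have hFmono : Monotone F := fun a b hab =>
    ENNReal.toReal_mono (hfin _) (measure_mono (Set.Iic_subset_Iic.2 hab))
  have hSanti : Antitone S := fun a b hab =>
    ENNReal.toReal_mono (hfin _) (measure_mono (Set.Ioi_subset_Ioi hab))
  have hFS : ∀ t, F t + S t = 1 := by
    intro t
    have h1 : μ (Set.Iic t) + μ (Set.Ioi t) = 1 := by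
      have := measure_add_measure_compl (μ := μ) (measurableSet_Iic (a := t))
      rwa [Set.compl_Iic, measure_univ] at this
    have h2 := congrArg ENNReal.toReal h1
    rwa [ENNReal.toReal_add (hfin _) (hfin _), ENNReal.toReal_one] at h2
  have hSle1 : ∀ t, S t ≤ 1 := by
    intro t
    have : μ (Set.Ioi t) ≤ 1 := by
      rw [← measure_univ (μ := μ)]; exact measure_mono (Set.subset_univ _)
    simpa using ENNReal.toReal_mono (by norm_num) this
  have hSnn : ∀ t, 0 ≤ S t := fun t => ENNReal.toReal_nonneg
  have hS0 : S 0 = 1 := by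
    have hzero : μ {(0:ℝ)} = 0 := by
      rw [hdens, withDensity_apply _ (measurableSet_singleton 0)]
      exact setLIntegral_measure_zero _ _ (by simp)
    have hIic : μ (Set.Iic (0:ℝ)) = 0 := by
      have hsub : Set.Iic (0:ℝ) ⊆ Set.Iio 0 ∪ {0} := by
        intro t ht
        rcases lt_or_eq_of_le (Set.mem_Iic.1 ht) with h | h
        · exact Or.inl h
        · exact Or.inr (by simp [h])
      refine measure_mono_null hsub ?_
      exact le_antisymm (le_trans (measure_union_le _ _) (by rw [hnonneg, hzero]; simp))
        zero_le
    have hF0 : F 0 = 0 := by simp only [hFdef]; rw [hIic]; simp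
    have := hFS 0; linarith
  -- bddBelow of quantile sets
  have hBdd : ∀ r : ℝ, 0 < r → BddBelow {v : ℝ | r ≤ F v} := by
    intro r hr
    refine ⟨0, fun v hv => ?_⟩
    by_contra h
    push_neg at h
    have hFv : μ (Set.Iic v) = 0 :=
      measure_mono_null (fun t ht => lt_of_le_of_lt ht h) hnonneg
    have : F v = 0 := by simp only [hFdef]; rw [hFv]; simp
    rw [Set.mem_setOf_eq, this] at hv
    linarith
  -- from the quantile hypothesis : q ≤ F x
  have hAne : {v : ℝ | q ≤ F v}.Nonempty := by
    have h1 : Tendsto (fun v : ℝ => μ (Set.Iic v)) atTop (nhds (μ Set.univ)) :=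
      tendsto_measure_Iic_atTop μ
    rw [measure_univ] at h1
    have h2 : Tendsto F atTop (nhds 1) := by
      have := (ENNReal.tendsto_toReal (a := 1) (by norm_num)).comp h1
      exact this
    have h3 : ∀ᶠ v in atTop, q ≤ F v := h2.eventually (eventually_ge_nhds (by linarith))
    exact ⟨_, h3.exists.choose_spec⟩
  have hFx : q ≤ F x := by
    have hseq : Tendsto (fun n : ℕ => F (x + 1 / (n + 1))) atTop (nhds (F x)) := by
      have hiInter : (⋂ n : ℕ, Set.Iic (x + 1 / (n + 1))) = Set.Iic x := by
        ext t
        simp only [Set.mem_iInter, Set.mem_Iic]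
        constructor
        · intro h
          by_contra hlt
          push_neg at hlt
          obtain ⟨n, hn⟩ := exists_nat_one_div_lt (by linarith : (0:ℝ) < t - x)
          have := h n
          linarith
        · intro h n
          have : (0:ℝ) < 1 / (n + 1) := by positivity
          linarith
      have hanti : Antitone fun n : ℕ => Set.Iic (x + 1 / ((n:ℝ) + 1)) := by
        intro n m hnm
        apply Set.Iic_subset_Iic.2
        have h1 : (n:ℝ) + 1 ≤ (m:ℝ) + 1 := by exact_mod_cast Nat.succ_le_succ hnm
        have h2 : 1 / ((m:ℝ) + 1) ≤ 1 / ((n:ℝ) + 1) :=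
          one_div_le_one_div_of_le (by positivity) h1
        linarith
      have := tendsto_measure_iInter_atTop (μ := μ)
        (s := fun n : ℕ => Set.Iic (x + 1 / (n + 1)))
        (fun n => measurableSet_Iic.nullMeasurableSet) hanti ⟨0, hfin _⟩
      rw [hiInter] at this
      have := (ENNReal.tendsto_toReal (hfin (Set.Iic x))).comp this
      exact this
    refine ge_of_tendsto hseq ?_
    filter_upwards with n
    have hpos : (0:ℝ) < 1 / ((n:ℝ) + 1) := by positivity
    have hlt : quantileFn μ q < x + 1 / (n + 1) := lt_of_le_of_lt hquant (by linarith)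
    obtain ⟨w, hw, hwlt⟩ := exists_lt_of_csInf_lt hAne hlt
    exact le_trans hw (hFmono hwlt.le)
  have hSx : S x ≤ 1 - q := by have := hFS x; linarith
  -- it suffices to show q' ≤ F c
  suffices hFc : q' ≤ F c by exact csInf_le (hBdd q' (lt_trans hq hqq')) hFc
  by_cases hSc0 : μ (Set.Ioi c) = 0
  · have hSc : S c = 0 := by simp only [hSdef]; rw [hSc0]; simp
    have := hFS c; linarith
  -- main case: positive tail at c
  have hScpos : 0 < S c := ENNReal.toReal_pos hSc0 (hfin _)
  have hStpos : ∀ t, t ≤ c → 0 < S t := fun t ht => lt_of_lt_of_le hScpos (hSanti ht)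
  have hSxpos : 0 < S x := hStpos x hxc
  set h₀ : ℝ := f x / S x with hh0def
  have hh0 : 0 ≤ h₀ := div_nonneg (hf x) (hSnn x)
  have hIoit : ∀ t, t ≤ c → μ (Set.Ioi t) ≠ 0 := by
    intro t ht h0
    exact hSc0 (measure_mono_null (Set.Ioi_subset_Ioi ht) h0)
  -- Step A : small decrease on [0, x]
  have stepA : ∀ t₁ t₂ : ℝ, 0 ≤ t₁ → t₁ ≤ t₂ → t₂ ≤ x →
      S t₁ * (1 - h₀ * (t₂ - t₁)) ≤ S t₂ := by
    intro t₁ t₂ h0t h12 h2x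
    have hbound : ∀ t ∈ Set.Ioc t₁ t₂, f t ≤ h₀ * S t₁ := by
      intro t ht
      have htx : t ≤ x := le_trans ht.2 h2x
      have htc : t ≤ c := le_trans htx hxc
      have hSt : 0 < S t := hStpos t htc
      have hmono : f t / S t ≤ h₀ := hmhr t x htx (hIoit x hxc)
      have h1 : f t ≤ h₀ * S t := (div_le_iff₀ hSt).1 hmono
      have h2 : S t ≤ S t₁ := hSanti ht.1.le
      nlinarith
    have key := interval_mass_upper f μ hdens (M := h₀ * S t₁) h12
      (mul_nonneg hh0 (hSnn t₁)) hbound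
    have hdiff := tail_diff' μ h12
    simp only [hSdef] at key hdiff ⊢
    nlinarith [key, hdiff]
  -- Step B : large decrease on [x, c]
  have stepB : ∀ t₁ t₂ : ℝ, x ≤ t₁ → t₁ ≤ t₂ → t₂ ≤ c →
      S t₂ * (1 + h₀ * (t₂ - t₁)) ≤ S t₁ := by
    intro t₁ t₂ h1x h12 h2c
    have hbound : ∀ t ∈ Set.Ioc t₁ t₂, h₀ * S t₂ ≤ f t := by
      intro t ht
      have htc : t ≤ c := le_trans ht.2 h2c
      have hSt : 0 < S t := hStpos t htc
      have hmono : h₀ ≤ f t / S t := hmhr x t (le_trans h1x ht.1.le) (hIoit t htc)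
      have h1 : h₀ * S t ≤ f t := (le_div_iff₀ hSt).1 hmono
      have h2 : S t₂ ≤ S t := hSanti ht.2
      nlinarith
    have key := interval_mass_lower f μ hdens (M := h₀ * S t₂) h12
      (mul_nonneg hh0 (hSnn t₂)) hbound
    have hdiff := tail_diff' μ h12
    simp only [hSdef] at key hdiff ⊢
    nlinarith [key, hdiff]
  -- Induction A : S x ≥ (1 - h₀x/n)^n
  have indA : ∀ n : ℕ, 0 < n → h₀ * x / n ≤ 1 →
      (1 + -(h₀ * x) / n) ^ n ≤ S x := by
    intro n hn hsmall
    have hnR : (0:ℝ) < n := by exact_mod_cast hn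
    have hfac : (0:ℝ) ≤ 1 + -(h₀ * x) / n := by
      rw [neg_div]; linarith
    have aux : ∀ i : ℕ, i ≤ n → (1 + -(h₀ * x) / n) ^ i ≤ S (x * i / n) := by
      intro i
      induction i with
      | zero => intro _; simp [hS0]
      | succ i ih =>
        intro hin
        have h1 := ih (Nat.le_of_succ_le hin)
        have hinR : (i:ℝ) + 1 ≤ n := by exact_mod_cast hin
        have hiR : (0:ℝ) ≤ i := Nat.cast_nonneg i
        have ht1 : (0:ℝ) ≤ x * i / n := by positivity
        have ht12 : x * i / n ≤ x * ((i:ℝ) + 1) / n := by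
          have h : (i:ℝ) ≤ (i:ℝ) + 1 := by linarith
          gcongr
        have ht2x : x * ((i:ℝ) + 1) / n ≤ x := by
          rw [div_le_iff₀ hnR]; nlinarith
        have hst := stepA (x * i / n) (x * (i + 1) / n) ht1 ht12 ht2x
        have harith : x * ((i:ℝ) + 1) / n - x * i / n = x / n := by
          field_simp; ring
        rw [harith] at hst
        have hstep : (1 + -(h₀ * x) / n) ^ i * (1 + -(h₀ * x) / n) ≤
            S (x * i / n) * (1 - h₀ * (x / n)) := by
          have heq : 1 - h₀ * (x / n) = 1 + -(h₀ * x) / n := by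
            rw [neg_div]; ring
          rw [heq]
          exact mul_le_mul_of_nonneg_right h1 hfac
        calc (1 + -(h₀ * x) / n) ^ (i + 1)
            = (1 + -(h₀ * x) / n) ^ i * (1 + -(h₀ * x) / n) := by ring
          _ ≤ S (x * i / n) * (1 - h₀ * (x / n)) := hstep
          _ ≤ S (x * ((i:ℝ) + 1) / n) := hst
          _ = S (x * ((i + 1 : ℕ) : ℝ) / n) := by norm_cast
    have := aux n le_rfl
    have hxn : x * (n:ℝ) / n = x := by field_simp
    rw [hxn] at this
    exact this
  -- limit A : exp(-h₀x) ≤ S x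
  have expA : Real.exp (-(h₀ * x)) ≤ S x := by
    have htend := Real.tendsto_one_add_div_pow_exp (-(h₀ * x))
    refine le_of_tendsto htend ?_
    filter_upwards [eventually_ge_atTop (⌈h₀ * x⌉₊ + 1)] with n hn
    have hn1 : 0 < n := by omega
    have hnR : (0:ℝ) < n := by exact_mod_cast hn1
    refine indA n hn1 ?_
    rw [div_le_one hnR]
    calc h₀ * x ≤ (⌈h₀ * x⌉₊ : ℝ) := Nat.le_ceil _
      _ ≤ n := by exact_mod_cast Nat.le_of_succ_le hn
  -- Induction B : S x ≥ S c (1 + h₀(c-x)/n)^n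
  have indB : ∀ n : ℕ, 0 < n → S c * (1 + h₀ * (c - x) / n) ^ n ≤ S x := by
    intro n hn
    have hnR : (0:ℝ) < n := by exact_mod_cast hn
    have hcx0 : (0:ℝ) ≤ c - x := by linarith
    have hfac : (0:ℝ) ≤ 1 + h₀ * (c - x) / n := by
      have h : (0:ℝ) ≤ h₀ * (c - x) / n := div_nonneg (mul_nonneg hh0 hcx0) hnR.le
      linarith
    have aux : ∀ i : ℕ, i ≤ n →
        S c * (1 + h₀ * (c - x) / n) ^ i ≤ S (c - (c - x) * i / n) := by
      intro i
      induction i with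
      | zero => intro _; simp
      | succ i ih =>
        intro hin
        have h1 := ih (Nat.le_of_succ_le hin)
        have hinR : (i:ℝ) + 1 ≤ n := by exact_mod_cast hin
        have hiR : (0:ℝ) ≤ i := Nat.cast_nonneg i
        have hx1 : x ≤ c - (c - x) * ((i:ℝ) + 1) / n := by
          rw [le_sub_comm]
          calc (c - x) * ((i:ℝ) + 1) / n ≤ (c - x) * (n:ℝ) / n := by gcongr
            _ = c - x := by field_simp
        have h12 : c - (c - x) * ((i:ℝ) + 1) / n ≤ c - (c - x) * i / n := by
          have h : (i:ℝ) ≤ (i:ℝ) + 1 := by linarith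
          have : (c - x) * (i:ℝ) / n ≤ (c - x) * ((i:ℝ) + 1) / n := by gcongr
          linarith
        have h2c : c - (c - x) * (i:ℝ) / n ≤ c := by
          have : (0:ℝ) ≤ (c - x) * i / n := div_nonneg (mul_nonneg hcx0 hiR) hnR.le
          linarith
        have hst := stepB _ _ hx1 h12 h2c
        have harith : c - (c - x) * (i:ℝ) / n - (c - (c - x) * ((i:ℝ) + 1) / n)
            = (c - x) / n := by field_simp; ring
        rw [harith] at hst
        have heq : 1 + h₀ * ((c - x) / n) = 1 + h₀ * (c - x) / n := by ring
        rw [heq] at hst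
        calc S c * (1 + h₀ * (c - x) / n) ^ (i + 1)
            = (S c * (1 + h₀ * (c - x) / n) ^ i) * (1 + h₀ * (c - x) / n) := by ring
          _ ≤ S (c - (c - x) * i / n) * (1 + h₀ * (c - x) / n) :=
              mul_le_mul_of_nonneg_right h1 hfac
          _ ≤ S (c - (c - x) * ((i:ℝ) + 1) / n) := hst
          _ = S (c - (c - x) * ((i + 1 : ℕ) : ℝ) / n) := by norm_cast
    have := aux n le_rfl
    have hcn : c - (c - x) * (n:ℝ) / n = x := by field_simp; ring
    rw [hcn] at this
    exact this
  -- limit B : S c * exp(h₀(c-x)) ≤ S x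
  have expB : S c * Real.exp (h₀ * (c - x)) ≤ S x := by
    have htend := (Real.tendsto_one_add_div_pow_exp (h₀ * (c - x))).const_mul (S c)
    refine le_of_tendsto htend ?_
    filter_upwards [eventually_ge_atTop 1] with n hn
    exact indB n hn
  -- combine everything
  have hq_exp : 1 - q = Real.exp (-L) := by
    simp only [hLdef, neg_neg]; exact (Real.exp_log h1q).symm
  have hq'_exp : 1 - q' = Real.exp (-L') := by
    simp only [hL'def, neg_neg]; exact (Real.exp_log h1q').symm
  have hh0x : L ≤ h₀ * x := by
    have h1 : Real.exp (-(h₀ * x)) ≤ Real.exp (-L) := by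
      rw [← hq_exp]; exact le_trans expA hSx
    have := Real.exp_le_exp.1 h1
    linarith
  have hcx2 : h₀ * (c - x) ≥ L' - L := by
    have h1 : c - x = x * ((L' - L) / L) := by
      rw [hcx]; field_simp
    have h2 : (0:ℝ) ≤ (L' - L) / L := div_nonneg (by linarith) hL.le
    calc h₀ * (c - x) = (h₀ * x) * ((L' - L) / L) := by rw [h1]; ring
      _ ≥ L * ((L' - L) / L) := by nlinarith
      _ = L' - L := by field_simp
  have hSc_bound : S c ≤ 1 - q' := by
    have h1 : S c * Real.exp (h₀ * (c - x)) ≤ Real.exp (-L) := by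
      rw [← hq_exp]; exact le_trans expB hSx
    have h2 : Real.exp (L' - L) ≤ Real.exp (h₀ * (c - x)) := Real.exp_le_exp.2 hcx2
    have h3 : S c * Real.exp (L' - L) ≤ Real.exp (-L) := by
      calc S c * Real.exp (L' - L) ≤ S c * Real.exp (h₀ * (c - x)) :=
            mul_le_mul_of_nonneg_left h2 (hSnn c)
        _ ≤ Real.exp (-L) := h1
    have h4 : S c ≤ Real.exp (-L) / Real.exp (L' - L) := by
      rw [le_div_iff₀ (Real.exp_pos _)]; exact h3
    rw [← Real.exp_sub] at h4
    have h5 : -L - (L' - L) = -L' := by ring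
    rw [h5] at h4
    rw [hq'_exp]
    exact h4
  have := hFS c
  linarith
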